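/- Let x₁ < x₂ < … < x_n be real numbers, σ > 0, c > 0, and define the n×n matrix J with entries J_{ij} = c·e^{−σ|x_i − x_j|}. Then det J = u(x₁) v(x_n) ∏_{i=1}^{n−1} d(x_{i+1} − x_i), where u(x) = e^{σx}, v(x) = c·e^{−σx}, and d(s) = 2c·sinh(σ s). -/
import Mathlib


open Matrix

/-- Determinant of the exponential kernel matrix: for `x₁ < ⋯ < x_{n+1}`, `σ, c > 0`,
the matrix `J_{ij} = c e^{-σ|x_i - x_j|}` has
`det J = u(x₁) v(x_{n+1}) ∏_i d(x_{i+1} - x_i)` with `u(x) = e^{σx}`,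
`v(x) = c e^{-σx}`, `d(s) = 2c sinh(σs)`. -/
theorem exp_kernel_det (n : ℕ) (x : Fin (n + 1) → ℝ) (hx : StrictMono x)
    (σ c : ℝ) (hσ : 0 < σ) (hc : 0 < c) :
    (Matrix.of fun i j : Fin (n + 1) => c * Real.exp (-σ * |x i - x j|)).det =
      Real.exp (σ * x 0) * (c * Real.exp (-σ * x (Fin.last n))) *
        ∏ i : Fin n, 2 * c * Real.sinh (σ * (x i.succ - x i.castSucc)) := by
  induction n with
  | zero =>
    have h : Real.exp (σ * x 0) * Real.exp (-σ * x 0) = 1 := by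
      rw [← Real.exp_add]; ring_nf; exact Real.exp_zero
    have h0 : Fin.last 0 = (0 : Fin 1) := rfl
    rw [Matrix.det_fin_one, h0]
    simp only [Matrix.of_apply, sub_self, abs_zero, mul_zero, Real.exp_zero, mul_one,
      Finset.univ_eq_empty, Finset.prod_empty]
    linear_combination (-c) * h
  | succ n ih =>
    set A : Matrix (Fin (n + 2)) (Fin (n + 2)) ℝ :=
      Matrix.of fun i j : Fin (n + 2) => c * Real.exp (-σ * |x i - x j|) with hA
    set L : Fin (n + 2) := Fin.last (n + 1) with hL
    set P : Fin (n + 2) := (Fin.last n).castSucc with hP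
    have hne : L ≠ P := by simp [hL, hP, Fin.ext_iff]
    set e : ℝ := Real.exp (-σ * (x L - x P)) with he
    set B := A.updateRow L (A L + (-e) • A P) with hB
    have hdet : A.det = B.det := (Matrix.det_updateRow_add_smul_self A hne (-e)).symm
    have hPL : x P < x L := by
      apply hx; simp [hL, hP, Fin.lt_def]
    have hrow : ∀ j : Fin (n + 2), j ≠ L → B L j = 0 := by
      intro j hj
      have hjn : (j : ℕ) < n + 1 := Fin.val_lt_last hj
      have hjP : x j ≤ x P := by
        apply hx.monotone
        simp only [hP, Fin.le_def, Fin.coe_castSucc, Fin.val_last]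
        omega
      have hjL : x j ≤ x L := hjP.trans hPL.le
      simp only [hB, Matrix.updateRow_self, Pi.add_apply, Pi.smul_apply, smul_eq_mul, hA,
        Matrix.of_apply]
      rw [abs_of_nonneg (by linarith), abs_of_nonneg (by linarith), he]
      have hmul : Real.exp (-σ * (x L - x P)) * Real.exp (-σ * (x P - x j)) =
          Real.exp (-σ * (x L - x j)) := by
        rw [← Real.exp_add]; congr 1; ring
      linear_combination (-c) * hmul
    have hBLL : B L L = c - e * (c * e) := by
      simp only [hB, Matrix.updateRow_self, Pi.add_apply, Pi.smul_apply, smul_eq_mul, hA,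
        Matrix.of_apply, he]
      rw [show x L - x L = 0 by ring, abs_zero, abs_of_nonpos (by linarith)]
      rw [show -σ * (0:ℝ) = 0 by ring, Real.exp_zero, show -(x P - x L) = x L - x P by ring]
      ring
    have hsub : B.submatrix Fin.castSucc Fin.castSucc =
        Matrix.of fun i j : Fin (n + 1) => c * Real.exp (-σ * |x i.castSucc - x j.castSucc|) := by
      ext i j
      simp only [Matrix.submatrix_apply, hB]
      rw [Matrix.updateRow_ne (Fin.castSucc_lt_last i).ne]
      simp [hA]
    have hdetB : B.det = B L L * (B.submatrix Fin.castSucc Fin.castSucc).det := by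
      rw [Matrix.det_succ_row B L]
      rw [Finset.sum_eq_single L]
      · rw [hL]
        simp only [Fin.val_last, Fin.succAbove_last]
        ring_nf
        simp [pow_mul']
      · intro j _ hj
        rw [hrow j hj]; ring
      · intro h; exact absurd (Finset.mem_univ L) h
    -- apply ih
    have hy : StrictMono (x ∘ Fin.castSucc) := fun a b hab => hx (by simpa using hab)
    have hih := ih (x ∘ Fin.castSucc) hy
    rw [hsub] at hdetB
    rw [hdet, hdetB]
    simp only [Function.comp] at hih
    rw [hih, hBLL]
    -- final algebra
    rw [Fin.prod_univ_castSucc (fun i : Fin (n+1) => 2 * c * Real.sinh (σ * (x i.succ - x i.castSucc)))]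
    simp only [Fin.succ_last, Fin.succ_castSucc]
    rw [Real.sinh_eq]
    have hE : ∀ t : ℝ, Real.exp t ≠ 0 := fun t => (Real.exp_pos t).ne'
    have hc0 : x (Fin.castSucc (0 : Fin (n+1))) = x 0 := by rw [Fin.castSucc_zero]
    have hLs : x (Fin.last n.succ) = x L := rfl
    have hnege : Real.exp (-(σ * (x L - x P))) = e := by rw [he]; congr 1; ring
    set E : ℝ := Real.exp (σ * (x L - x P)) with hEdef
    have f1 : e * Real.exp (-σ * x P) = Real.exp (-σ * x L) := by
      rw [he, ← Real.exp_add]; congr 1; ring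
    have f2 : E * Real.exp (-σ * x L) = Real.exp (-σ * x P) := by
      rw [hEdef, ← Real.exp_add]; congr 1; ring
    rw [hc0, hLs, hnege]
    set p : ℝ := ∏ i : Fin n, 2 * c * Real.sinh (σ * (x i.succ.castSucc - x i.castSucc.castSucc))
      with hpdef
    linear_combination (-(Real.exp (σ * x 0) * p * c^2)) * f2 +
      (-(Real.exp (σ * x 0) * p * c^2 * e)) * f1
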